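/- Metastability-containing maximum of Gray-coded numbers: define max_BRGC : B^k × B^k → B^k by max_BRGC(x, y) := rg(max{rg^{-1}(x), rg^{-1}(y)}). If x, y ∈ BM^k each have precision-1 with respect to rg, then the output specification [max_BRGC]_M(x, y) has precision-1: for all stable u, v ∈ B^k with u ∈ ∏_i [max_BRGC]_M(x,y)_i and v ∈ ∏_i [max_BRGC]_M(x,y)_i, |rg^{-1}(u) − rg^{-1}(v)| ≤ 1. Moreover, at most one component of [max_BRGC]_M(x, y) equals BM. -/

import Mathlib

set_option linter.unusedVariables false

attribute [local instance] Classical.propDecidable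

/-- Signal values: stable `zero`, `one`, and metastable `meta`. -/
inductive BM : Type
  | zero
  | one
  | metastable
  deriving DecidableEq

/-- Embedding of stable Boolean values into `BM`. -/
def BM.ofBool : Bool → BM
  | false => BM.zero
  | true => BM.one

/-- `inResM x y` means `y ∈ ResM(x)`, the set of partial resolutions of `x`. -/
def inResM {k : ℕ} (x y : Fin k → BM) : Prop :=
  ∀ i, x i = y i ∨ x i = BM.metastable

/-- `inRes x y` means `y ∈ Res(x)`, i.e. `y` is a complete (stable) resolution of `x`. -/
def inRes {k : ℕ} (x y : Fin k → BM) : Prop :=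
  inResM x y ∧ ∀ i, y i ≠ BM.metastable

/-- The complete resolutions of `x`, viewed as Boolean words. -/
def boolRes {k : ℕ} (x : Fin k → BM) : Set (Fin k → Bool) :=
  { z | ∀ i, x i = BM.ofBool (z i) ∨ x i = BM.metastable }

/-- The metastable (Kleene) extension `f_M : BM^k → BM` of a Boolean function
`f : B^k → B`: it outputs a stable value `b` iff all complete resolutions of the
input evaluate to `b` under `f`, and `meta` otherwise. -/
noncomputable def kleene {k : ℕ} (f : (Fin k → Bool) → Bool) (x : Fin k → BM) : BM :=
  if ∀ z ∈ boolRes x, f z = false then BM.zero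
  else if ∀ z ∈ boolRes x, f z = true then BM.one
  else BM.metastable

/-- Combinational logic with `m` input nodes: formulas built from inputs,
`BM`-constants (gates of indegree 0), and gates computing the metastable extension
of a Boolean function of their in-neighbors.  (A DAG evaluates exactly like the
formula obtained by unsharing, so this faithfully captures evaluation of
combinational logic DAGs.) -/
inductive Comb (m : ℕ) : Type
  | input : Fin m → Comb m
  | const : BM → Comb m
  | gate : (j : ℕ) → ((Fin j → Bool) → Bool) → (Fin j → Comb m) → Comb m

/-- Recursive evaluation of combinational logic on input `x ∈ BM^m`. -/
noncomputable def Comb.eval {m : ℕ} (x : Fin m → BM) : Comb m → BM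
  | .input i => x i
  | .const b => b
  | .gate _ f cs => kleene f (fun t => (cs t).eval x)

/-- Register types: simple, mask-0, mask-1. -/
inductive RegType : Type
  | simple
  | mask0
  | mask1
  deriving DecidableEq

/-- `regRead t b (o, b')` holds iff a register of type `t` in state `b` can be read
with read value `o`, moving to state `b'`:  a register in a stable state yields that
state and keeps it; a simple register in state `meta` yields `meta` and stays `meta`;
a mask-`c` register in state `meta` either yields `c` staying in state `meta`, or
yields `meta` changing its state to `1 - c`. -/
def regRead : RegType → BM → BM × BM → Prop
  | _, BM.zero, p => p = (BM.zero, BM.zero)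
  | _, BM.one, p => p = (BM.one, BM.one)
  | RegType.simple, BM.metastable, p => p = (BM.metastable, BM.metastable)
  | RegType.mask0, BM.metastable, p => p = (BM.zero, BM.metastable) ∨ p = (BM.metastable, BM.one)
  | RegType.mask1, BM.metastable, p => p = (BM.one, BM.metastable) ∨ p = (BM.metastable, BM.zero)

/-- A circuit with `m` input, `k` local and `n` output registers: a type for each
register, combinational logic with `m + k` input nodes (one per non-output register)
and `k + n` output nodes (one per non-input register), and an initialization of the
non-input registers. -/
structure Circuit (m k n : ℕ) : Type where
  inType : Fin m → RegType
  locType : Fin k → RegType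
  outType : Fin n → RegType
  logic : Fin (k + n) → Comb (m + k)
  init : Fin (k + n) → BM

/-- A state of a circuit: values of input, local, and output registers. -/
structure CState (m k n : ℕ) : Type where
  inp : Fin m → BM
  loc : Fin k → BM
  out : Fin n → BM

/-- A state as a word in `BM^{m+k+n}`. -/
def CState.toVec {m k n : ℕ} (s : CState m k n) : Fin (m + (k + n)) → BM :=
  Fin.append s.inp (Fin.append s.loc s.out)

/-- Read phase: `o ∈ BM^{m+k}` are possible read values of the non-output registers
in state `s`, and `ι'` the corresponding successor states of the input registers. -/
def ReadRel {m k n : ℕ} (C : Circuit m k n) (s : CState m k n)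
    (o : Fin (m + k) → BM) (ι' : Fin m → BM) : Prop :=
  (∀ i : Fin m, regRead (C.inType i) (s.inp i) (o (Fin.castAdd k i), ι' i)) ∧
  (∀ j : Fin k, ∃ st', regRead (C.locType j) (s.loc j) (o (Fin.natAdd m j), st'))

/-- Evaluation phase: `f^G` applied to the read values. -/
noncomputable def evalLogic {m k n : ℕ} (C : Circuit m k n) (o : Fin (m + k) → BM) :
    Fin (k + n) → BM :=
  fun j => (C.logic j).eval o

/-- `Write^C(s)`: possible values written to the non-input registers. -/
def WriteSet {m k n : ℕ} (C : Circuit m k n) (s : CState m k n) :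
    Set (Fin (k + n) → BM) :=
  { w | ∃ o ι', ReadRel C s o ι' ∧ inResM (evalLogic C o) w }

/-- Successor-state relation: read all non-output registers, evaluate the logic,
and write an arbitrary partial resolution of the result to the non-input registers. -/
def Succ {m k n : ℕ} (C : Circuit m k n) (s s' : CState m k n) : Prop :=
  ∃ o ι', ReadRel C s o ι' ∧ s'.inp = ι' ∧
    inResM (evalLogic C o) (Fin.append s'.loc s'.out)

/-- `reach C r s₀ = S^C_r(s₀)`: states reachable in `r` rounds from `s₀`. -/
def reach {m k n : ℕ} (C : Circuit m k n) : ℕ → CState m k n → Set (CState m k n)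
  | 0, s => {s}
  | r + 1, s => { t | ∃ u ∈ reach C r s, Succ C u t }

/-- The initial state of `C` with input `ι`. -/
def initState {m k n : ℕ} (C : Circuit m k n) (ι : Fin m → BM) : CState m k n :=
  ⟨ι, fun j => C.init (Fin.castAdd n j), fun j => C.init (Fin.natAdd k j)⟩

/-- `C_r(ι)`: possible outputs after `r` rounds on input `ι`. -/
def Cout {m k n : ℕ} (C : Circuit m k n) (r : ℕ) (ι : Fin m → BM) :
    Set (Fin n → BM) :=
  { y | ∃ s ∈ reach C r (initState C ι), y = s.out }

/-- `r` rounds of `C` implement `f` iff `C_r(ι) ⊆ f(ι)` for all inputs `ι`. -/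
def Implements {m k n : ℕ} (C : Circuit m k n) (r : ℕ)
    (f : (Fin m → BM) → Set (Fin n → BM)) : Prop :=
  ∀ ι, Cout C r ι ⊆ f ι

/-- All registers of the circuit are simple. -/
def OnlySimple {m k n : ℕ} (C : Circuit m k n) : Prop :=
  (∀ i, C.inType i = RegType.simple) ∧ (∀ j, C.locType j = RegType.simple) ∧
    (∀ j, C.outType j = RegType.simple)

/-- `Fun_S^r`: functions implementable by `r` rounds of circuits with only simple
registers. -/
def FunS (r m n : ℕ) : Set ((Fin m → BM) → Set (Fin n → BM)) :=
  { f | ∃ k, ∃ C : Circuit m k n, OnlySimple C ∧ Implements C r f }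

/-- `Fun_M^r`: functions implementable by `r` rounds of circuits with arbitrary
register types. -/
def FunM (r m n : ℕ) : Set ((Fin m → BM) → Set (Fin n → BM)) :=
  { f | ∃ k, ∃ C : Circuit m k n, Implements C r f }

/-- A pivotal sequence over `BM^N`: consecutive elements differ in exactly one bit,
and that bit is `meta` in one of the two elements. -/
def PivotalSeq {N ℓ : ℕ} (x : Fin (ℓ + 1) → Fin N → BM) : Prop :=
  ∀ i : Fin ℓ,
    ∃ j : Fin N,
      x i.castSucc j ≠ x i.succ j ∧
      (x i.castSucc j = BM.metastable ∨ x i.succ j = BM.metastable) ∧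
      ∀ j' : Fin N, x i.castSucc j' ≠ x i.succ j' → j' = j

/-- A function `f : BM^m → Pow(BM^n)` is natural iff it is bit-wise and closed
(a product of component functions each taking values in `{{0}, {1}, BM}`)
and specific (stabilizing the input restricts the output). -/
def IsNatural {m n : ℕ} (f : (Fin m → BM) → Set (Fin n → BM)) : Prop :=
  (∃ g : Fin n → (Fin m → BM) → Set BM,
      (∀ i x, g i x = {BM.zero} ∨ g i x = {BM.one} ∨ g i x = (Set.univ : Set BM)) ∧
      (∀ x, f x = { y | ∀ i, y i ∈ g i x })) ∧
  (∀ x y, inRes x y → f y ⊆ f x)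

/-- The `i`-th component of the metastable closure of `f : B^m → B^n`. -/
noncomputable def mclosureC {m n : ℕ} (f : (Fin m → Bool) → Fin n → Bool)
    (x : Fin m → BM) (i : Fin n) : Set BM :=
  if ∀ z ∈ boolRes x, f z i = false then {BM.zero}
  else if ∀ z ∈ boolRes x, f z i = true then {BM.one}
  else Set.univ

/-- The metastable closure `[f]_M : BM^m → Pow(BM^n)` of `f : B^m → B^n`. -/
noncomputable def mclosure {m n : ℕ} (f : (Fin m → Bool) → Fin n → Bool)
    (x : Fin m → BM) : Set (Fin n → BM) :=
  { y | ∀ i, y i ∈ mclosureC f x i }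

/-- The `k`-bit binary reflected Gray code `rg(x)`: bit `i` of `x XOR ⌊x/2⌋`. -/
def grayEnc (k : ℕ) (x : ℕ) : Fin k → Bool := fun i => (x ^^^ x / 2).testBit i

/-- Gray decoding `rg⁻¹`: binary bit `i` is the XOR of the Gray bits `j ≥ i`. -/
noncomputable def grayDec (k : ℕ) (g : Fin k → Bool) : ℕ :=
  ∑ i : Fin k,
    if (Finset.univ.filter fun j : Fin k => i ≤ j ∧ g j).card % 2 = 1
    then 2 ^ (i : ℕ) else 0

/-- `max_BRGC : B^k × B^k → B^k` (inputs concatenated) is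
`rg(max{rg⁻¹(x), rg⁻¹(y)})`. -/
noncomputable def maxBRGC (k : ℕ) (z : Fin (k + k) → Bool) : Fin k → Bool :=
  grayEnc k (max (grayDec k (z ∘ Fin.castAdd k)) (grayDec k (z ∘ Fin.natAdd k)))

/-- `x ∈ BM^k` has precision-1 w.r.t. the Gray code: any two complete resolutions
decode to values at distance at most 1. -/
noncomputable def precision1 {k : ℕ} (x : Fin k → BM) : Prop :=
  ∀ y z : Fin k → Bool, y ∈ boolRes x → z ∈ boolRes x →
    (grayDec k y : ℤ) - grayDec k z ≤ 1

lemma xor_div_two (x y : ℕ) : (x ^^^ y)/2 = x/2 ^^^ y/2 := by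
  apply Nat.eq_of_testBit_eq
  intro j
  rw [← Nat.testBit_succ, Nat.testBit_xor, Nat.testBit_xor, Nat.testBit_succ, Nat.testBit_succ]

lemma sum_testBit : ∀ (k c : ℕ), c < 2^k →
    (∑ i : Fin k, if Nat.testBit c i then 2^(i:ℕ) else 0) = c := by
  intro k
  induction k with
  | zero => intro c hc; interval_cases c; simp
  | succ k ih =>
    intro c hc
    rw [Fin.sum_univ_succ]
    have hterm : ∀ i : Fin k,
        (if Nat.testBit c (i.succ : Fin (k+1)) then 2^((i.succ : Fin (k+1)):ℕ) else 0)
          = 2 * (if Nat.testBit (c/2) i then 2^(i:ℕ) else 0) := by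
      intro i
      rw [Fin.val_succ, Nat.testBit_succ, pow_succ]
      by_cases h : Nat.testBit (c/2) i <;> simp [h] <;> ring
    rw [Finset.sum_congr rfl (fun i _ => hterm i), ← Finset.mul_sum,
      ih (c/2) (by rw [pow_succ] at hc; omega)]
    simp only [Fin.val_zero, pow_zero, Nat.testBit_zero]
    by_cases h : c % 2 = 1 <;> simp [h] <;> omega

lemma hgs_aux (k c : ℕ) : ∀ j : Fin k, grayEnc (k+1) c j.succ = grayEnc k (c/2) j := by
  intro j
  show (c ^^^ c/2).testBit (j.succ : Fin (k+1)) = ((c/2) ^^^ (c/2)/2).testBit j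
  rw [Fin.val_succ, Nat.testBit_succ, xor_div_two]

lemma gray_total_parity : ∀ (k c : ℕ), c < 2^k →
    (((Finset.univ.filter fun j : Fin k => grayEnc k c j = true).card % 2 = 1)
      ↔ Nat.testBit c 0 = true) := by
  intro k
  induction k with
  | zero =>
    intro c hc
    interval_cases c
    simp [Nat.testBit_zero]
  | succ k ih =>
    intro c hc
    have hc2 : c / 2 < 2^k := by rw [pow_succ] at hc; omega
    have hg0 : grayEnc (k+1) c 0 = ((Nat.testBit c 0) ^^ (Nat.testBit c 1)) := by
      show (c ^^^ c/2).testBit 0 = _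
      rw [Nat.testBit_xor, ← Nat.testBit_succ]
    rw [Finset.card_filter, Fin.sum_univ_succ]
    have hterm : ∀ j : Fin k,
        (if grayEnc (k+1) c j.succ = true then 1 else 0)
          = (if grayEnc k (c/2) j = true then 1 else 0) := by
      intro j; rw [hgs_aux]
    rw [Finset.sum_congr rfl (fun j _ => hterm j), ← Finset.card_filter]
    have hrest := ih (c/2) hc2
    rw [← Nat.testBit_succ] at hrest
    cases hb : Nat.testBit c 0 <;> cases hb' : Nat.testBit c 1 <;>
      rw [hb, hb'] at hg0 <;> rw [hb'] at hrest <;> simp at hg0 <;>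
      simp [hg0] at hrest ⊢ <;> omega

lemma gray_parity : ∀ (k c : ℕ), c < 2^k → ∀ i : Fin k,
    (((Finset.univ.filter fun j : Fin k => i ≤ j ∧ grayEnc k c j).card % 2 = 1)
      ↔ Nat.testBit c i = true) := by
  intro k
  induction k with
  | zero => intro c hc i; exact i.elim0
  | succ k ih =>
    intro c hc i
    have hc2 : c / 2 < 2^k := by rw [pow_succ] at hc; omega
    induction i using Fin.cases with
    | zero =>
      rw [Finset.card_filter,
        Finset.sum_congr rfl
          (fun j _ => if_congr (and_iff_right (Fin.zero_le j)) rfl rfl),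
        ← Finset.card_filter]
      simpa using gray_total_parity (k+1) c hc
    | succ i' =>
      rw [Finset.card_filter, Fin.sum_univ_succ]
      have h0 : (if ((Fin.succ i' ≤ (0:Fin (k+1))) ∧ grayEnc (k+1) c 0 = true) then (1:ℕ) else 0) = 0 := by
        rw [if_neg]
        rintro ⟨hle, -⟩
        exact Fin.succ_ne_zero i' (Fin.le_zero_iff.mp hle)
      rw [h0]
      have hterm : ∀ j : Fin k,
          (if (Fin.succ i' ≤ Fin.succ j ∧ grayEnc (k+1) c j.succ = true) then (1:ℕ) else 0)
            = (if (i' ≤ j ∧ grayEnc k (c/2) j = true) then 1 else 0) :=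
        fun j => if_congr (and_congr Fin.succ_le_succ_iff (by rw [hgs_aux])) rfl rfl
      rw [Finset.sum_congr rfl (fun j _ => hterm j), ← Finset.card_filter, zero_add,
        ih (c/2) hc2 i', Fin.val_succ, Nat.testBit_succ]

lemma grayDec_grayEnc (k c : ℕ) (hc : c < 2^k) : grayDec k (grayEnc k c) = c := by
  unfold grayDec
  rw [Finset.sum_congr rfl
    (fun i _ => if_congr (gray_parity k c hc i) rfl rfl)]
  exact sum_testBit k c hc

lemma grayDec_lt (k : ℕ) (g : Fin k → Bool) : grayDec k g < 2^k := by
  have hle : grayDec k g ≤ ∑ i : Fin k, 2^(i:ℕ) := by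
    apply Finset.sum_le_sum
    intro i _
    split <;> simp
  have hsum : ∀ k : ℕ, (∑ i : Fin k, 2^(i:ℕ)) = 2^k - 1 := by
    intro k
    induction k with
    | zero => simp
    | succ k ih =>
      rw [Fin.sum_univ_castSucc]
      simp only [Fin.coe_castSucc, Fin.val_last, ih]
      have : (1:ℕ) ≤ 2^k := Nat.one_le_two_pow
      rw [pow_succ]
      omega
  calc grayDec k g ≤ ∑ i : Fin k, 2^(i:ℕ) := hle
    _ = 2^k - 1 := hsum k
    _ < 2^k := by
        have h1 : (1:ℕ) ≤ 2^k := Nat.one_le_two_pow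
        omega

lemma xor_even_odd (a b : ℕ) : (2*a) ^^^ (2*b+1) = 2*(a ^^^ b) + 1 := by
  apply Nat.eq_of_testBit_eq
  intro i
  cases i with
  | zero =>
    simp only [Nat.testBit_zero, Nat.testBit_xor]
    have h1 : (2*a) % 2 = 0 := by omega
    have h2 : (2*b+1) % 2 = 1 := by omega
    have h3 : (2*(a^^^b)+1) % 2 = 1 := by omega
    simp [Nat.testBit_zero, h1, h2, h3]
  | succ j =>
    rw [Nat.testBit_succ, Nat.testBit_succ, xor_div_two]
    have h1 : (2*a)/2 = a := by omega
    have h2 : (2*b+1)/2 = b := by omega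
    have h3 : (2*(a^^^b)+1)/2 = a^^^b := by omega
    rw [h1, h2, h3]

lemma xor_odd_even (a b : ℕ) : (2*a+1) ^^^ (2*b) = 2*(a ^^^ b) + 1 := by
  rw [Nat.xor_comm, xor_even_odd, Nat.xor_comm]

lemma xor_succ (c : ℕ) : ∃ v, c ^^^ (c+1) = 2^(v+1) - 1 ∧ (c/2) ^^^ ((c+1)/2) = 2^v - 1 := by
  induction c using Nat.strong_induction_on with
  | _ c ih =>
    rcases Nat.even_or_odd c with ⟨m, hm⟩ | ⟨m, hm⟩
    · refine ⟨0, ?_, ?_⟩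
      · have hc : c = 2*m := by omega
        subst hc
        have h := xor_even_odd m m
        simpa [Nat.xor_self] using h
      · have hc : c = 2*m := by omega
        subst hc
        have h1 : (2*m)/2 = m := by omega
        have h2 : (2*m+1)/2 = m := by omega
        simp [h1, h2, Nat.xor_self]
    · subst hm
      obtain ⟨w, hw1, _⟩ := ih m (by omega)
      refine ⟨w+1, ?_, ?_⟩
      · have h2 : 2*m+1+1 = 2*(m+1) := by ring
        rw [h2, xor_odd_even, hw1]
        have hp : (1:ℕ) ≤ 2^(w+1) := Nat.one_le_two_pow
        rw [pow_succ]
        omega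
      · have h1 : (2*m+1)/2 = m := by omega
        have h2 : (2*m+1+1)/2 = m+1 := by omega
        rw [h1, h2, hw1]

lemma gray_xor_succ (c : ℕ) : ∃ v, (c ^^^ c/2) ^^^ ((c+1) ^^^ (c+1)/2) = 2^v := by
  obtain ⟨v, h1, h2⟩ := xor_succ c
  refine ⟨v, ?_⟩
  have hre : (c ^^^ c/2) ^^^ ((c+1) ^^^ (c+1)/2) = (c ^^^ (c+1)) ^^^ (c/2 ^^^ (c+1)/2) := by
    rw [Nat.xor_assoc, Nat.xor_assoc]
    congr 1
    rw [← Nat.xor_assoc, ← Nat.xor_assoc, Nat.xor_comm (c/2)]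
  rw [hre, h1, h2]
  apply Nat.eq_of_testBit_eq
  intro i
  rw [Nat.testBit_xor, Nat.testBit_two_pow_sub_one, Nat.testBit_two_pow_sub_one]
  rcases lt_trichotomy i v with h | h | h
  · simp [Nat.lt_succ_of_lt h, h, Nat.testBit_two_pow_of_ne (by omega : v ≠ i)]
  · subst h
    simp [Nat.lt_succ_self, Nat.testBit_two_pow_self, lt_irrefl]
  · simp [Nat.testBit_two_pow_of_ne (by omega : v ≠ i), (by omega : ¬ i < v+1), (by omega : ¬ i < v)]
    omega


lemma BM.ofBool_ne_meta (b : Bool) : BM.ofBool b ≠ BM.metastable := by cases b <;> simp [BM.ofBool]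

lemma BM.ofBool_inj {a b : Bool} (h : BM.ofBool a = BM.ofBool b) : a = b := by
  cases a <;> cases b <;> simp_all [BM.ofBool]

lemma boolRes_nonempty {k : ℕ} (x : Fin k → BM) : (boolRes x).Nonempty := by
  refine ⟨fun i => match x i with | BM.one => true | _ => false, fun i => ?_⟩
  cases h : x i <;> simp [h, BM.ofBool]

lemma boolRes_append_left {k : ℕ} {x y : Fin k → BM} {z : Fin (k+k) → Bool}
    (hz : z ∈ boolRes (Fin.append x y)) : (z ∘ Fin.castAdd k) ∈ boolRes x := by
  intro i
  have := hz (Fin.castAdd k i)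
  rwa [Fin.append_left] at this

lemma boolRes_append_right {k : ℕ} {x y : Fin k → BM} {z : Fin (k+k) → Bool}
    (hz : z ∈ boolRes (Fin.append x y)) : (z ∘ Fin.natAdd k) ∈ boolRes y := by
  intro i
  have := hz (Fin.natAdd k i)
  rwa [Fin.append_right] at this

lemma boolRes_append_mk {k : ℕ} {x y : Fin k → BM} {z1 z2 : Fin k → Bool}
    (h1 : z1 ∈ boolRes x) (h2 : z2 ∈ boolRes y) :
    Fin.append z1 z2 ∈ boolRes (Fin.append x y) := by
  intro j
  induction j using Fin.addCases with
  | left i => rw [Fin.append_left, Fin.append_left]; exact h1 i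
  | right i => rw [Fin.append_right, Fin.append_right]; exact h2 i

lemma mclosureC_const {m n : ℕ} (f : (Fin m → Bool) → Fin n → Bool) (X : Fin m → BM)
    (i : Fin n) (b : Bool) (h : ∀ z ∈ boolRes X, f z i = b) :
    mclosureC f X i = {BM.ofBool b} := by
  obtain ⟨z0, hz0⟩ := boolRes_nonempty X
  unfold mclosureC
  cases b with
  | false => rw [if_pos h]; rfl
  | true =>
    have hneg : ¬ ∀ z ∈ boolRes X, f z i = false := by
      intro hall
      have h1 := hall z0 hz0
      have h2 := h z0 hz0
      rw [h1] at h2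
      exact Bool.false_ne_true h2
    rw [if_neg hneg, if_pos h]
    rfl

lemma singleton_ne_univ (b : Bool) : ({BM.ofBool b} : Set BM) ≠ Set.univ := by
  intro h
  have : BM.metastable ∈ ({BM.ofBool b} : Set BM) := h ▸ Set.mem_univ _
  exact BM.ofBool_ne_meta b this.symm

/-- if `x, y ∈ BM^k` have precision-1 w.r.t. the Gray code, then the
metastable closure `[max_BRGC]_M(x, y)` has precision-1 (all stable words in the
output specification decode to values at distance at most 1), and at most one of its
components equals `BM`. -/
theorem maxBRGC_closure_precision1 {k : ℕ} (x y : Fin k → BM)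
    (hx : precision1 x) (hy : precision1 y) :
    (∀ u v : Fin k → Bool,
        (∀ i, BM.ofBool (u i) ∈ mclosureC (maxBRGC k) (Fin.append x y) i) →
        (∀ i, BM.ofBool (v i) ∈ mclosureC (maxBRGC k) (Fin.append x y) i) →
        |(grayDec k u : ℤ) - (grayDec k v : ℤ)| ≤ 1) ∧
    (∀ i j : Fin k,
        mclosureC (maxBRGC k) (Fin.append x y) i = Set.univ →
        mclosureC (maxBRGC k) (Fin.append x y) j = Set.univ → i = j) := by
  classical
  set X := Fin.append x y with hX
  set f := maxBRGC k with hf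
  set N : (Fin (k+k) → Bool) → ℕ :=
    fun z => max (grayDec k (z ∘ Fin.castAdd k)) (grayDec k (z ∘ Fin.natAdd k)) with hN
  have hfN : ∀ z, f z = grayEnc k (N z) := fun z => rfl
  obtain ⟨za, hza, hdza⟩ := Nat.sInf_mem ((boolRes_nonempty x).image (grayDec k))
  obtain ⟨zb, hzb, hdzb⟩ := Nat.sInf_mem ((boolRes_nonempty y).image (grayDec k))
  set a := sInf (grayDec k '' boolRes x) with hadef
  set b := sInf (grayDec k '' boolRes y) with hbdef
  have ha_le : ∀ z ∈ boolRes x, a ≤ grayDec k z := fun z hz => Nat.sInf_le ⟨z, hz, rfl⟩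
  have hb_le : ∀ z ∈ boolRes y, b ≤ grayDec k z := fun z hz => Nat.sInf_le ⟨z, hz, rfl⟩
  have ha_ub : ∀ z ∈ boolRes x, grayDec k z ≤ a + 1 := by
    intro z hz
    have h1 := hx z za hz hza
    rw [hdza] at h1
    omega
  have hb_ub : ∀ z ∈ boolRes y, grayDec k z ≤ b + 1 := by
    intro z hz
    have h1 := hy z zb hz hzb
    rw [hdzb] at h1
    omega
  set c := max a b with hc
  have hcx : c < 2^k := by
    have h1 : a < 2^k := hdza ▸ grayDec_lt k za
    have h2 : b < 2^k := hdzb ▸ grayDec_lt k zb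
    omega
  have hrange : ∀ z ∈ boolRes X, c ≤ N z ∧ N z ≤ c + 1 := by
    intro z hz
    have h1 := boolRes_append_left hz
    have h2 := boolRes_append_right hz
    have e1 := ha_le _ h1
    have e2 := ha_ub _ h1
    have e3 := hb_le _ h2
    have e4 := hb_ub _ h2
    simp only [hN, hc]
    omega
  by_cases hcase : ∃ z ∈ boolRes X, N z = c + 1
  · -- some resolution attains c+1
    obtain ⟨z1, hz1, hNz1⟩ := hcase
    have hc1x : c + 1 < 2^k := by
      have h1 : grayDec k (z1 ∘ Fin.castAdd k) < 2^k := grayDec_lt k _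
      have h2 : grayDec k (z1 ∘ Fin.natAdd k) < 2^k := grayDec_lt k _
      simp only [hN] at hNz1
      omega
    obtain ⟨v0, hv0⟩ := gray_xor_succ c
    have hv0k : v0 < k := by
      have h1 : c ^^^ c/2 < 2^k := Nat.xor_lt_two_pow hcx (by omega)
      have h2 : (c+1) ^^^ (c+1)/2 < 2^k := Nat.xor_lt_two_pow hc1x (by omega)
      have h3 : (2:ℕ)^v0 < 2^k := hv0 ▸ Nat.xor_lt_two_pow h1 h2
      exact (Nat.pow_lt_pow_iff_right (by norm_num)).mp h3
    set jv : Fin k := ⟨v0, hv0k⟩ with hjv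
    have hbit : ∀ i : Fin k, i ≠ jv → grayEnc k c i = grayEnc k (c+1) i := by
      intro i hi
      have hne : v0 ≠ (i:ℕ) := fun h => hi (Fin.ext h.symm)
      have h1 : ((c ^^^ c/2).testBit (i:ℕ) ^^ ((c+1) ^^^ (c+1)/2).testBit (i:ℕ)) = false := by
        rw [← Nat.testBit_xor, hv0]
        exact Nat.testBit_two_pow_of_ne hne
      show (c ^^^ c/2).testBit i = ((c+1) ^^^ (c+1)/2).testBit i
      cases hb1 : (c^^^c/2).testBit (i:ℕ) <;> cases hb2 : ((c+1)^^^(c+1)/2).testBit (i:ℕ) <;>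
        rw [hb1, hb2] at h1 <;> simp at h1 ⊢
    have hbitv : grayEnc k c jv ≠ grayEnc k (c+1) jv := by
      have h1 : ((c ^^^ c/2).testBit v0 ^^ ((c+1) ^^^ (c+1)/2).testBit v0) = true := by
        rw [← Nat.testBit_xor, hv0]
        exact Nat.testBit_two_pow_self
      intro h
      have h' : (c ^^^ c/2).testBit v0 = ((c+1) ^^^ (c+1)/2).testBit v0 := h
      rw [h'] at h1
      simp at h1
    have hpin : ∀ i, i ≠ jv → mclosureC f X i = {BM.ofBool (grayEnc k c i)} := by
      intro i hi
      apply mclosureC_const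
      intro z hz
      rw [hfN]
      have hr := hrange z hz
      rcases (by omega : N z = c ∨ N z = c+1) with h | h
      · rw [h]
      · rw [h, ← hbit i hi]
    have hdec : ∀ u : Fin k → Bool, (∀ i, BM.ofBool (u i) ∈ mclosureC f X i) →
        grayDec k u = c ∨ grayDec k u = c + 1 := by
      intro u hu
      have hui : ∀ i, i ≠ jv → u i = grayEnc k c i := by
        intro i hi
        have h1 := hu i
        rw [hpin i hi] at h1
        exact BM.ofBool_inj (Set.mem_singleton_iff.mp h1)
      by_cases hj : u jv = grayEnc k c jv
      · left
        have heq : u = grayEnc k c := funext fun i => by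
          by_cases hi : i = jv
          · subst hi; exact hj
          · exact hui i hi
        rw [heq, grayDec_grayEnc k c hcx]
      · right
        have heq : u = grayEnc k (c+1) := funext fun i => by
          by_cases hi : i = jv
          · subst hi
            have hbool : ∀ p q r : Bool, p ≠ q → r ≠ q → p = r := by decide
            exact hbool _ _ _ hj (Ne.symm hbitv)
          · rw [hui i hi, hbit i hi]
        rw [heq, grayDec_grayEnc k (c+1) hc1x]
    constructor
    · intro u v hu hv
      rcases hdec u hu with h1 | h1 <;> rcases hdec v hv with h2 | h2 <;>
        rw [h1, h2] <;> rw [abs_le] <;> constructor <;> push_cast <;> omega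
    · intro i j hi hj
      have hij : ∀ l, mclosureC f X l = Set.univ → l = jv := by
        intro l hl
        by_contra hll
        rw [hpin l hll] at hl
        exact singleton_ne_univ _ hl
      rw [hij i hi, hij j hj]
  · -- all resolutions give c
    push_neg at hcase
    have hall : ∀ z ∈ boolRes X, N z = c := by
      intro z hz
      have h1 := hrange z hz
      have h2 := hcase z hz
      omega
    have hpin : ∀ i, mclosureC f X i = {BM.ofBool (grayEnc k c i)} := by
      intro i
      apply mclosureC_const
      intro z hz
      rw [hfN, hall z hz]
    constructor
    · intro u v hu hv
      have huv : u = v := funext fun i => by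
        have h1 := hu i
        have h2 := hv i
        rw [hpin i] at h1 h2
        have e1 := BM.ofBool_inj (Set.mem_singleton_iff.mp h1)
        have e2 := BM.ofBool_inj (Set.mem_singleton_iff.mp h2)
        rw [e1, e2]
      rw [huv]
      simp
    · intro i j hi hj
      rw [hpin i] at hi
      exact absurd hi (singleton_ne_univ _)
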